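/- Let f: ℝ → ℝ be defined by f(y) = exp(-1/y²) for y ≠ 0 and f(0) = 0. Let G(x,y) = (x - f(y))² and Y(x) = argmin{G(x,y) : y² ≤ 1}. Then for x ∈ (0, e⁻¹], Y(x) = {√(1/(-ln x)), -√(1/(-ln x))}, and for x ∈ [-1, 0], Y(x) = {0}. -/

import Mathlib

open Set

/-- The `C^∞` function `f(y) = exp(-1/y²)` for `y ≠ 0`, `f(0) = 0`. -/
noncomputable def fEx (y : ℝ) : ℝ := if y = 0 then 0 else Real.exp (-(1 / y ^ 2))

/-- `G(x,y) = (x - f(y))²`. -/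
noncomputable def GEx (x y : ℝ) : ℝ := (x - fEx y) ^ 2

/-- `Y(x) = argmin { G(x,y) : y² ≤ 1 }`. -/
noncomputable def YEx (x : ℝ) : Set ℝ :=
  {y : ℝ | y ^ 2 ≤ 1 ∧ ∀ z : ℝ, z ^ 2 ≤ 1 → GEx x y ≤ GEx x z}

lemma fEx_nonneg (y : ℝ) : 0 ≤ fEx y := by
  unfold fEx; split
  · exact le_rfl
  · exact (Real.exp_pos _).le

lemma fEx_pos {y : ℝ} (hy : y ≠ 0) : 0 < fEx y := by
  unfold fEx; rw [if_neg hy]; exact Real.exp_pos _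

theorem stmt0 :
    (∀ x ∈ Ioc (0 : ℝ) (Real.exp (-1)),
      YEx x = {Real.sqrt (1 / (-Real.log x)), -Real.sqrt (1 / (-Real.log x))}) ∧
    (∀ x ∈ Icc (-1 : ℝ) 0, YEx x = {0}) := by
  constructor
  · intro x hx
    obtain ⟨hx0, hx1⟩ := hx
    have hlog : Real.log x ≤ -1 := by
      calc Real.log x ≤ Real.log (Real.exp (-1)) := Real.log_le_log hx0 hx1
        _ = -1 := Real.log_exp _
    have hneg : (1 : ℝ) ≤ -Real.log x := by linarith
    have hnegpos : (0 : ℝ) < -Real.log x := by linarith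
    set s := Real.sqrt (1 / (-Real.log x)) with hs
    have hs2 : s ^ 2 = 1 / (-Real.log x) := by
      rw [hs, Real.sq_sqrt (by positivity)]
    have hs2le : s ^ 2 ≤ 1 := by
      rw [hs2]; rw [div_le_one hnegpos]; exact hneg
    have hspos : 0 < s := Real.sqrt_pos.mpr (by positivity)
    have hfs : fEx s = x := by
      unfold fEx; rw [if_neg hspos.ne', hs2, one_div_one_div, neg_neg, Real.exp_log hx0]
    have hGs : GEx x s = 0 := by unfold GEx; rw [hfs]; ring
    -- f y = x ↔ y = s ∨ y = -s
    have key : ∀ y : ℝ, fEx y = x ↔ (y = s ∨ y = -s) := by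
      intro y
      constructor
      · intro hy
        by_cases h0 : y = 0
        · exfalso; rw [h0] at hy; unfold fEx at hy; simp at hy; linarith
        · unfold fEx at hy; rw [if_neg h0] at hy
          have := congrArg Real.log hy
          rw [Real.log_exp] at this
          have hy2 : y ^ 2 = 1 / (-Real.log x) := by
            have hy2pos : (0:ℝ) < y ^ 2 := by positivity
            field_simp at this ⊢
            have hl : Real.log x ≠ 0 := (by linarith : Real.log x < 0).ne
            field_simp
            nlinarith [this]
          have hsq : y ^ 2 = s ^ 2 := by rw [hy2, hs2]
          have hmul : (y - s) * (y + s) = 0 := by nlinarith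
          rcases mul_eq_zero.mp hmul with h | h
          · exact Or.inl (by linarith)
          · exact Or.inr (by linarith)
      · rintro (rfl | rfl)
        · exact hfs
        · unfold fEx at hfs ⊢
          rw [if_neg hspos.ne'] at hfs
          rw [if_neg (by simpa using hspos.ne' : -s ≠ 0), neg_sq]; exact hfs
    ext y
    simp only [YEx, mem_setOf_eq, mem_insert_iff, mem_singleton_iff]
    constructor
    · rintro ⟨hy1, hy2⟩
      have := hy2 s hs2le
      rw [hGs] at this
      have hG0 : GEx x y = 0 := le_antisymm this (by unfold GEx; positivity)
      have : fEx y = x := by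
        unfold GEx at hG0
        have := pow_eq_zero_iff (n := 2) (by norm_num) |>.mp hG0
        linarith
      exact key y |>.mp this
    · intro hy
      have hfy : fEx y = x := (key y).mpr hy
      have hy2 : y ^ 2 ≤ 1 := by
        rcases hy with rfl | rfl
        · exact hs2le
        · rw [neg_sq]; exact hs2le
      refine ⟨hy2, fun z hz => ?_⟩
      have : GEx x y = 0 := by unfold GEx; rw [hfy]; ring
      rw [this]; unfold GEx; positivity
  · intro x hx
    obtain ⟨hx1, hx0⟩ := hx
    ext y
    simp only [YEx, mem_setOf_eq, mem_singleton_iff]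
    constructor
    · rintro ⟨hy1, hy2⟩
      by_contra h0
      have hfy : 0 < fEx y := fEx_pos h0
      have hle := hy2 0 (by norm_num)
      have hG0 : GEx x 0 = x ^ 2 := by unfold GEx fEx; simp
      have hGy : GEx x y = (x - fEx y) ^ 2 := rfl
      rw [hG0, hGy] at hle
      nlinarith
    · rintro rfl
      refine ⟨by norm_num, fun z hz => ?_⟩
      have hG0 : GEx x 0 = x ^ 2 := by unfold GEx fEx; simp
      have hGz : GEx x z = (x - fEx z) ^ 2 := rfl
      rw [hG0, hGz]
      nlinarith [fEx_nonneg z]
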